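/- Consider the maps s, t : ℝ³ → ℝ² given by s(x,y,z) = (x,z) and t(x,y,z) = (y, z − x·y). Identify W = {(u₁,u₂,u₃) ∈ (ℝ³)³ : s(u₁) = s(u₂), t(u₂) = t(u₃)} with ℝ⁵ via coordinates (x₁,y₁,z₁,y₂,x₃), so that p(x₁,y₁,z₁,y₂,x₃) = (x₁,y₁,z₁) and q(x₁,y₁,z₁,y₂,x₃) = (x₃, y₂, z₁ + (x₃ − x₁)y₂). Then for every point (x,y,z) ∈ ℝ³ with y ≠ 0, there is no map φ defined on any neighborhood of the point w₀ = (x,y,z,y,x) in ℝ⁵ with values in ℝ⁵ satisfying p ∘ φ = q, q ∘ φ = p, and φ(w₀) = w₀. -/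
import Mathlib


/-- Projection `p(x₁,y₁,z₁,y₂,x₃) = (x₁,y₁,z₁)`. -/
def pMap (w : ℝ × ℝ × ℝ × ℝ × ℝ) : ℝ × ℝ × ℝ :=
  (w.1, w.2.1, w.2.2.1)

/-- Projection `q(x₁,y₁,z₁,y₂,x₃) = (x₃, y₂, z₁ + (x₃ − x₁)·y₂)`. -/
def qMap (w : ℝ × ℝ × ℝ × ℝ × ℝ) : ℝ × ℝ × ℝ :=
  (w.2.2.2.2, w.2.2.2.1, w.2.2.1 + (w.2.2.2.2 - w.1) * w.2.2.2.1)

/-- Example 5 of the paper, the contact distribution: for any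
point `(x,y,z)` with `y ≠ 0`, there is no map `φ` on a neighborhood of
`w₀ = (x,y,z,y,x)` in `ℝ⁵` with `p ∘ φ = q`, `q ∘ φ = p` and `φ(w₀) = w₀`. -/
theorem statement13 (x y z : ℝ) (hy : y ≠ 0) :
    ¬ ∃ (U : Set (ℝ × ℝ × ℝ × ℝ × ℝ)) (φ : ℝ × ℝ × ℝ × ℝ × ℝ → ℝ × ℝ × ℝ × ℝ × ℝ),
      IsOpen U ∧ (x, y, z, y, x) ∈ U ∧
      (∀ w ∈ U, pMap (φ w) = qMap w ∧ qMap (φ w) = pMap w) ∧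
      φ (x, y, z, y, x) = (x, y, z, y, x) := by
  rintro ⟨U, φ, hU, hmem, hpq, -⟩
  obtain ⟨ε, hε, hball⟩ := Metric.isOpen_iff.mp hU _ hmem
  set δ := ε / 2 with hδ
  have hδpos : 0 < δ := by positivity
  have hδε : δ < ε := by linarith
  set w : ℝ × ℝ × ℝ × ℝ × ℝ := (x, y, z, y + δ, x + δ) with hw
  have hwU : w ∈ U := by
    apply hball
    have : dist w (x, y, z, y, x) = δ := by
      simp [hw, Prod.dist_eq, Real.dist_eq, abs_of_pos hδpos, le_abs_self,
        abs_of_nonneg hδpos.le]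
      positivity
    rw [Metric.mem_ball, this]
    exact hδε
  obtain ⟨h1, h2⟩ := hpq w hwU
  -- extract coordinates
  have e1 : (φ w).1 = x + δ := congrArg Prod.fst h1
  have e5 : (φ w).2.2.2.2 = x := congrArg Prod.fst h2
  have e4 : (φ w).2.2.2.1 = y := congrArg (fun v => v.2.1) h2
  have e3 : (φ w).2.2.1 = z + (x + δ - x) * (y + δ) :=
    congrArg (fun v => v.2.2) h1
  have e6 : (φ w).2.2.1 + ((φ w).2.2.2.2 - (φ w).1) * (φ w).2.2.2.1 = z :=
    congrArg (fun v => v.2.2) h2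
  rw [e1, e5, e4, e3] at e6
  have : δ * δ = 0 := by ring_nf at e6 ⊢; linarith
  exact (mul_pos hδpos hδpos).ne' this
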